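/- Let P_n = {1, 2, ..., n} ordered by divisibility, let f : P_n → R and G : P_n → R be functions into a commutative ring, and define the matrix M with entries M(a,b) = Σ_{c | gcd(a,b)} f(c)·G(a/c). Then det M = f(1)·f(2)···f(n)·G(1)^n. -/
import Mathlib


/-- **Apostol-type determinant.** For `{1,…,n}` ordered by divisibility and functions
`f, G` into a commutative ring, the matrix with entries `∑_{c ∣ gcd(a,b)} f(c)·G(a/c)`
has determinant `f(1)⋯f(n)·G(1)ⁿ`. -/
theorem det_apostol {R : Type*} [CommRing R] (n : ℕ) (f G : ℕ → R) :
    Matrix.det (Matrix.of fun a b : Finset.Icc 1 n =>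
        ∑ c ∈ (Nat.gcd a b).divisors, f c * G ((a : ℕ) / c)) =
      (∏ a ∈ Finset.Icc 1 n, f a) * G 1 ^ n := by
  set I := Finset.Icc 1 n with hI
  have hmem : ∀ a : I, 1 ≤ (a : ℕ) ∧ (a : ℕ) ≤ n := fun a => Finset.mem_Icc.mp a.2
  set A : Matrix I I R := Matrix.of fun a c : I =>
    if (c : ℕ) ∣ (a : ℕ) then f c * G ((a : ℕ) / c) else 0 with hA
  set B : Matrix I I R := Matrix.of fun c b : I =>
    if (c : ℕ) ∣ (b : ℕ) then 1 else 0 with hB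
  have key : (Matrix.of fun a b : I =>
      ∑ c ∈ (Nat.gcd a b).divisors, f c * G ((a : ℕ) / c)) = A * B := by
    ext a b
    rw [Matrix.mul_apply]
    simp only [hA, hB, Matrix.of_apply, ite_mul, zero_mul, mul_one]
    have hterm : ∀ x : I, (if (x:ℕ) ∣ (a:ℕ) then
          f x * G ((a:ℕ)/(x:ℕ)) * (if (x:ℕ) ∣ (b:ℕ) then (1:R) else 0) else 0)
        = if (x:ℕ) ∣ (a:ℕ) ∧ (x:ℕ) ∣ (b:ℕ) then f x * G ((a:ℕ)/(x:ℕ)) else 0 := by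
      intro x; split_ifs with h1 h2 h3 <;> simp_all
    symm
    calc ∑ x : I, (if (x:ℕ) ∣ (a:ℕ) then
            f x * G ((a:ℕ)/(x:ℕ)) * (if (x:ℕ) ∣ (b:ℕ) then (1:R) else 0) else 0)
        = ∑ c ∈ I.filter (fun c => c ∣ (a:ℕ) ∧ c ∣ (b:ℕ)), f c * G ((a:ℕ)/c) := by
          rw [Finset.sum_filter,
            ← Finset.sum_coe_sort I (fun c => if c ∣ (a:ℕ) ∧ c ∣ (b:ℕ) then f c * G ((a:ℕ)/c) else 0)]
          exact Finset.sum_congr rfl fun x _ => hterm x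
      _ = ∑ c ∈ ((a:ℕ).gcd (b:ℕ)).divisors, f c * G ((a:ℕ)/c) := by
          congr 1
          ext c
          simp only [Finset.mem_filter, Nat.mem_divisors, Nat.dvd_gcd_iff, hI, Finset.mem_Icc]
          constructor
          · rintro ⟨⟨h1, h2⟩, hd⟩
            exact ⟨hd, Nat.gcd_ne_zero_left (by have := (hmem a).1; omega)⟩
          · rintro ⟨⟨hda, hdb⟩, _⟩
            have h1 := (hmem a).1
            have hc : 1 ≤ c := Nat.one_le_iff_ne_zero.mpr (by rintro rfl; simp at hda; omega)
            exact ⟨⟨hc, le_trans (Nat.le_of_dvd (by omega) hda) (hmem a).2⟩, hda, hdb⟩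
  rw [key, Matrix.det_mul]
  have hcard : Fintype.card I = n := by simp [hI]
  have hAdet : A.det = (∏ a ∈ I, f a) * G 1 ^ n := by
    rw [Matrix.det_of_lowerTriangular A]
    · have : ∀ i : I, A i i = f i * G 1 := by
        intro i
        have h1 := (hmem i).1
        simp [hA, Nat.div_self (by omega : 0 < (i:ℕ))]
      rw [Finset.prod_congr rfl fun i _ => this i, Finset.prod_mul_distrib,
        Finset.prod_const, Finset.card_univ, hcard,
        ← Finset.prod_coe_sort I f]
    · intro i j hij
      simp only [hA, Matrix.of_apply, ite_eq_right_iff]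
      intro hdvd
      exfalso
      have h1 : (1:ℕ) ≤ i := (hmem i).1
      have hji : (j:ℕ) ≤ (i:ℕ) := Nat.le_of_dvd (by omega) hdvd
      have : (i:ℕ) < (j:ℕ) := hij
      omega
  have hBdet : B.det = 1 := by
    rw [Matrix.det_of_upperTriangular]
    · simp [hB]
    · intro i j hij
      simp only [hB, Matrix.of_apply, ite_eq_right_iff]
      intro hdvd
      exfalso
      have h1 : (1:ℕ) ≤ j := (hmem j).1
      have : (i:ℕ) ≤ (j:ℕ) := Nat.le_of_dvd (by omega) hdvd
      have : (j:ℕ) < (i:ℕ) := hij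
      omega
  rw [hAdet, hBdet, mul_one]
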